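/- Let G be a directed graph on the vertex set {1,…,N} with neighbor sets N_κ, let N_max := max_κ |N_κ| ≥ 1, and for each vertex κ let f_κ : ℝⁿ × (ℝⁿ)^{N_κ} → ℝⁿ satisfy: |f_κ(x, b)| ≤ M for all arguments, |f_κ(x, b) − f_κ(x, b')| ≤ L₁ |b − b'|, and |f_κ(x, b) − f_κ(x', b)| ≤ L₂ |x − x'|, with constants M, L₁, L₂ > 0. Fix m ≥ 1, assign to each vertex κ an initial point x_{κ,G} ∈ ℝⁿ, fix a vertex i and a neighbor ℓ ∈ N_i, and assume the initial points used for i and for ℓ agree on N̄_i^m ∩ N̄_ℓ^m (consistent cell configurations). Let (χ_κ^{[i]}) and (χ_κ^{[ℓ]}) denote the reference solutions associated with i and ℓ respectively (per Definition of reference trajectories: if N_i^{m+1} = ∅ these solve χ̇_κ = f_κ(χ_κ, (χ_j)_{j∈N_κ}) for κ ∈ N̄_i^m with χ_κ(0) = x_{κ,G}; if N_i^{m+1} ≠ ∅ they solve this system only for κ ∈ N̄_i^{m−1}, with χ_κ(t) := x_{κ,G} held constant for κ ∈ N_i^m; and analogously for ℓ). Let t* be the unique positive solution of e^{L₂ t}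 − (L₂ + L₂²/(L₁ √N_max)) t − 1 = 0. Then for every κ ∈ N̄_ℓ^{m−1} it holds |χ_κ^{[i]}(t) − χ_κ^{[ℓ]}(t)| ≤ M t for all t ∈ [0, t*]. -/

import Mathlib

/-- `hasPath E m j i` : there is a directed path of length `m` from `j` to `i`. -/
def hasPath {V : Type*} (E : V → V → Prop) : ℕ → V → V → Prop
  | 0, j, i => j = i
  | (n + 1), j, i => ∃ k, E j k ∧ hasPath E n k i

/-- The neighbor set `N_i` of `i` : vertices `j ≠ i` with an edge `(j, i)`. -/
def nbr {V : Type*} (E : V → V → Prop) (i : V) : Set V := {j | j ≠ i ∧ E j i}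

/-- `nset E i m` = `N_i^m` : for `m ≥ 1`, the vertices `j ≠ i` from which `i` is
reachable by a path of length `m` but by no shorter path; `N_i^0 = {i}`. -/
def nset {V : Type*} (E : V → V → Prop) (i : V) : ℕ → Set V
  | 0 => {i}
  | (m + 1) => {j | j ≠ i ∧ hasPath E (m + 1) j i ∧ ∀ k < m + 1, ¬ hasPath E k j i}

/-- The `m`-neighbor set `N̄_i^m = ⋃_{k ≤ m} N_i^k` of `i`. -/
def nbar {V : Type*} (E : V → V → Prop) (i : V) (m : ℕ) : Set V :=
  ⋃ k ∈ Set.Iic m, nset E i k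

/-- The neighbors of `κ` as a finset. -/
def nbrFinset {Nv : ℕ} (E : Fin Nv → Fin Nv → Prop) [DecidableRel E] (κ : Fin Nv) :
    Finset (Fin Nv) :=
  Finset.univ.filter fun j => j ≠ κ ∧ E j κ

lemma hasPath_trans {V : Type*} {E : V → V → Prop} :
    ∀ {a : ℕ} {b : ℕ} {j k i : V}, hasPath E a j k → hasPath E b k i →
      hasPath E (a + b) j i := by
  intro a
  induction a with
  | zero => intro b j k i h1 h2; cases h1; simpa using h2
  | succ a ih =>
    intro b j k i h1 h2
    obtain ⟨k', he, hp⟩ := h1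
    have : hasPath E (a + b) k' i := ih hp h2
    exact (by rw [Nat.succ_add]; exact ⟨k', he, this⟩)

lemma mem_nbar_of_hasPath {V : Type*} {E : V → V → Prop} {i j : V} :
    ∀ {k r : ℕ}, k ≤ r → hasPath E k j i → j ∈ nbar E i r := by
  intro k
  induction k using Nat.strong_induction_on with
  | _ k ih =>
    intro r hkr hp
    by_cases hsh : ∃ k' < k, hasPath E k' j i
    · obtain ⟨k', hk', hp'⟩ := hsh
      exact ih k' hk' (le_trans (le_of_lt hk') hkr) hp'
    · push_neg at hsh
      rcases eq_or_ne j i with rfl | hne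
      · exact Set.mem_biUnion (Set.mem_Iic.2 (Nat.zero_le r)) (by simp [nset])
      · match k, hp with
        | 0, hp => exact absurd hp hne
        | (k'+1), hp =>
          refine Set.mem_biUnion (Set.mem_Iic.2 hkr) ?_
          exact ⟨hne, hp, fun k hk => hsh k hk⟩

lemma mem_nbar_elim {V : Type*} {E : V → V → Prop} {i j : V} {r : ℕ}
    (h : j ∈ nbar E i r) : ∃ k ≤ r, hasPath E k j i := by
  obtain ⟨s, ⟨k, rfl⟩, hs⟩ := h
  simp only [Set.mem_iUnion] at hs
  obtain ⟨hk, hj⟩ := hs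
  rw [Set.mem_Iic] at hk
  refine ⟨k, hk, ?_⟩
  match k, hj with
  | 0, hj => exact (show j = i by simpa [nset] using hj)
  | (k+1), hj => exact hj.2.1

lemma mem_nbar_pred {V : Type*} {E : V → V → Prop} {i j : V} {r k : ℕ}
    (hemp : nset E i (r + 1) = ∅) (hp : hasPath E k j i) (hk : k ≤ r + 1) :
    j ∈ nbar E i r := by
  rcases Nat.lt_or_ge k (r + 1) with h | h
  · exact mem_nbar_of_hasPath (Nat.lt_succ_iff.1 h) hp
  · have hkr : k = r + 1 := le_antisymm hk h
    subst hkr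
    rcases eq_or_ne j i with rfl | hne
    · exact Set.mem_biUnion (Set.mem_Iic.2 (Nat.zero_le r)) (by simp [nset])
    · by_cases hsh : ∃ k' < r + 1, hasPath E k' j i
      · obtain ⟨k', hk', hp'⟩ := hsh
        exact mem_nbar_of_hasPath (Nat.lt_succ_iff.1 hk') hp'
      · push_neg at hsh
        exact absurd (show j ∈ nset E i (r+1) from ⟨hne, hp, hsh⟩) (by simp [hemp])

lemma nbar_mono {V : Type*} {E : V → V → Prop} {i : V} {r r' : ℕ} (h : r ≤ r') :
    nbar E i r ⊆ nbar E i r' := by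
  intro j hj
  obtain ⟨k, hk, hp⟩ := mem_nbar_elim hj
  exact mem_nbar_of_hasPath (hk.trans h) hp

lemma nbar_split {V : Type*} {E : V → V → Prop} {i : V} {r : ℕ} {j : V}
    (h : j ∈ nbar E i (r + 1)) : j ∈ nbar E i r ∨ j ∈ nset E i (r + 1) := by
  obtain ⟨s, ⟨k, rfl⟩, hs⟩ := h
  simp only [Set.mem_iUnion] at hs
  obtain ⟨hk, hj⟩ := hs
  rw [Set.mem_Iic] at hk
  rcases Nat.lt_or_ge k (r + 1) with h | h
  · exact Or.inl (Set.mem_biUnion (Set.mem_Iic.2 (Nat.lt_succ_iff.1 h)) hj)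
  · exact Or.inr (le_antisymm hk h ▸ hj)

lemma mem_nbar_succ_of_nbr {V : Type*} {E : V → V → Prop} {x : V} {r : ℕ} {κ j : V}
    (hκ : κ ∈ nbar E x r) (hj : j ≠ κ) (he : E j κ) : j ∈ nbar E x (r + 1) := by
  obtain ⟨k, hk, hp⟩ := mem_nbar_elim hκ
  have : hasPath E (1 + k) j x := hasPath_trans (⟨κ, he, rfl⟩ : hasPath E 1 j κ) hp
  exact mem_nbar_of_hasPath (by omega) this

lemma lipseg {F : Type*} [NormedAddCommGroup F] [NormedSpace ℝ F] {χ φ : ℝ → F} {M : ℝ}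
    (hd : ∀ t ∈ Set.Ici (0:ℝ), HasDerivWithinAt χ (φ t) (Set.Ici 0) t)
    (hb : ∀ t, ‖φ t‖ ≤ M) {s t : ℝ} (hs : 0 ≤ s) (hst : s ≤ t) :
    ‖χ t - χ s‖ ≤ M * (t - s) := by
  have h1 : ∀ x ∈ Set.Icc s t, HasDerivWithinAt χ (φ x) (Set.Icc s t) x := by
    intro x hx
    exact (hd x (le_trans hs hx.1)).mono (fun y hy => le_trans hs hy.1)
  exact norm_image_sub_le_of_norm_deriv_le_segment' h1 (fun x _ => hb x) t
    (Set.right_mem_Icc.2 hst)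

lemma exp_quad {x : ℝ} (hx : 0 ≤ x) : Real.exp x - x - 1 ≤ x ^ 2 * Real.exp x := by
  have hd : ∀ s ∈ Set.Icc 0 x, HasDerivWithinAt (fun s => Real.exp s - s - 1)
      (Real.exp s - 1) (Set.Icc 0 x) s := by
    intro s _
    exact (((Real.hasDerivAt_exp s).sub (hasDerivAt_id s)).sub_const 1).hasDerivWithinAt
  have hb : ∀ s ∈ Set.Ico 0 x, ‖Real.exp s - 1‖ ≤ x * Real.exp x := by
    intro s hs
    have h2 : Real.exp s - 1 ≤ s * Real.exp s := by
      nlinarith [Real.add_one_le_exp (-s), Real.exp_pos s,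
        (by rw [← Real.exp_add]; simp : Real.exp (-s) * Real.exp s = 1)]
    have h3 : s * Real.exp s ≤ x * Real.exp x :=
      mul_le_mul hs.2.le (Real.exp_le_exp.2 hs.2.le) (Real.exp_pos s).le
        (hs.1.trans hs.2.le)
    rw [Real.norm_eq_abs, abs_of_nonneg (by nlinarith [Real.one_le_exp hs.1])]
    linarith
  have := norm_image_sub_le_of_norm_deriv_le_segment' hd hb x (Set.right_mem_Icc.2 hx)
  simp only [Real.exp_zero] at this
  rw [Real.norm_eq_abs] at this
  calc Real.exp x - x - 1 ≤ |Real.exp x - x - 1 - (1 - 0 - 1)| := by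
        rw [show (1:ℝ) - 0 - 1 = 0 by ring, sub_zero]; exact le_abs_self _
    _ ≤ x * Real.exp x * (x - 0) := this
    _ = x ^ 2 * Real.exp x := by ring

lemma gron_aux {F : Type*} [NormedAddCommGroup F] [NormedSpace ℝ F] {K c b : ℝ}
    (hK : 0 < K) {δ δ' : ℝ → F}
    (hcont : ContinuousOn δ (Set.Icc 0 b))
    (hderiv : ∀ t ∈ Set.Ico 0 b, HasDerivWithinAt δ (δ' t) (Set.Ici t) t)
    (h0 : δ 0 = 0)
    (hbnd : ∀ t ∈ Set.Ico 0 b, ‖δ' t‖ ≤ K * ‖δ t‖ + c * t) :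
    ∀ t ∈ Set.Icc 0 b, ‖δ t‖ ≤ c / K ^ 2 * (Real.exp (K * t) - K * t - 1) := by
  intro t ht
  have key : ∀ ε > 0, ‖δ t‖ ≤ c / K ^ 2 * (Real.exp (K * t) - K * t - 1)
      + ε * Real.exp (2 * K * t) := by
    intro ε hε
    have hB : ∀ x : ℝ, HasDerivAt
        (fun s => c / K ^ 2 * (Real.exp (K * s) - K * s - 1) + ε * Real.exp (2 * K * s))
        (c / K * (Real.exp (K * x) - 1) + ε * (2 * K * Real.exp (2 * K * x))) x := by
      intro x
      have h3 : HasDerivAt (fun s : ℝ => K * s) K x := by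
        simpa using (hasDerivAt_id x).const_mul K
      have h3' : HasDerivAt (fun s : ℝ => 2 * K * s) (2 * K) x := by
        simpa using (hasDerivAt_id x).const_mul (2 * K)
      have h1 : HasDerivAt (fun s : ℝ => Real.exp (K * s)) (Real.exp (K * x) * K) x := h3.exp
      have h2 : HasDerivAt (fun s : ℝ => Real.exp (2 * K * s))
          (Real.exp (2 * K * x) * (2 * K)) x := h3'.exp
      have := (((h1.sub h3).sub_const 1).const_mul (c / K ^ 2)).add (h2.const_mul ε)
      refine this.congr_deriv ?_
      field_simp
    have hbound : ∀ x ∈ Set.Ico 0 b,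
        ‖δ x‖ = c / K ^ 2 * (Real.exp (K * x) - K * x - 1) + ε * Real.exp (2 * K * x) →
        ‖δ' x‖ < c / K * (Real.exp (K * x) - 1) + ε * (2 * K * Real.exp (2 * K * x)) := by
      intro x hx hfB
      have h1 := hbnd x hx
      rw [hfB] at h1
      have e1 : K * (c / K ^ 2 * (Real.exp (K * x) - K * x - 1) + ε * Real.exp (2 * K * x))
          + c * x = c / K * (Real.exp (K * x) - 1) + K * (ε * Real.exp (2 * K * x)) := by
        field_simp
        ring
      have h2 : K * (ε * Real.exp (2 * K * x)) < ε * (2 * K * Real.exp (2 * K * x)) := by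
        nlinarith [Real.exp_pos (2 * K * x), mul_pos hK hε]
      linarith
    have ha : ‖δ 0‖ ≤ c / K ^ 2 * (Real.exp (K * 0) - K * 0 - 1) + ε * Real.exp (2 * K * 0) := by
      simp [h0, hε.le]
    exact image_norm_le_of_norm_deriv_right_lt_deriv_boundary hcont hderiv ha hB hbound ht
  by_contra hlt
  push_neg at hlt
  obtain ⟨ε, hε, hε2⟩ : ∃ ε > 0, c / K ^ 2 * (Real.exp (K * t) - K * t - 1)
      + ε * Real.exp (2 * K * t) < ‖δ t‖ := by
    have h3 : (0:ℝ) < Real.exp (2 * K * t) := Real.exp_pos _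
    set D := ‖δ t‖ - c / K ^ 2 * (Real.exp (K * t) - K * t - 1) with hD
    refine ⟨D / (2 * Real.exp (2 * K * t)), div_pos (sub_pos.2 hlt) (by positivity), ?_⟩
    have h4 : D / (2 * Real.exp (2 * K * t)) * Real.exp (2 * K * t) = D / 2 := by
      field_simp
    rw [h4]
    linarith
  exact absurd (key _ hε) (not_le.2 hε2)

set_option maxHeartbeats 1600000 in
/-- Worst-case deviation of the reference-trajectory estimates for a neighbor
`ℓ ∈ N_i` (Lemma on reference trajectory worst-case deviation): for consistent
cell configurations, `|χ_κ^{[i]}(t) − χ_κ^{[ℓ]}(t)| ≤ M t` for all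
`κ ∈ N̄_ℓ^{m−1}` and `t ∈ [0, t*]`, where `t*` is the unique positive root of
`e^{L₂ t} − (L₂ + L₂²/(L₁ √N_max)) t − 1 = 0`.  The reference solutions
`χ^{[i]}, χ^{[ℓ]}` are per the Definition of reference trajectories: if
`N_i^{m+1} = ∅` they solve the coupled system on `N̄_i^m`, else they solve it on
`N̄_i^{m−1}` with the agents in `N_i^m` held fixed at their initial points. -/
theorem stmt17 (Nv n : ℕ) (E : Fin Nv → Fin Nv → Prop) [DecidableRel E]
    (f : Fin Nv → EuclideanSpace ℝ (Fin n) → (Fin Nv → EuclideanSpace ℝ (Fin n)) →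
      EuclideanSpace ℝ (Fin n))
    (L₁ L₂ M : ℝ) (hL₁ : 0 < L₁) (hL₂ : 0 < L₂) (hM : 0 < M)
    (hbound : ∀ κ x b, ‖f κ x b‖ ≤ M)
    (hLip1 : ∀ κ x b b', ‖f κ x b - f κ x b'‖ ≤
      L₁ * Real.sqrt (∑ j ∈ nbrFinset E κ, ‖b j - b' j‖ ^ 2))
    (hLip2 : ∀ κ x x' b, ‖f κ x b - f κ x' b‖ ≤ L₂ * ‖x - x'‖)
    (Nmax : ℕ) (hNmax : Nmax = Finset.univ.sup fun κ => (nbrFinset E κ).card)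
    (hNmax1 : 1 ≤ Nmax)
    (m : ℕ) (hm : 1 ≤ m)
    (xGi xGl : Fin Nv → EuclideanSpace ℝ (Fin n))
    (i ℓ : Fin Nv) (hℓ : ℓ ∈ nbr E i)
    (hagree : ∀ κ ∈ nbar E i m ∩ nbar E ℓ m, xGi κ = xGl κ)
    (χi χl : Fin Nv → ℝ → EuclideanSpace ℝ (Fin n))
    (hIVPi :
      (nset E i (m + 1) = ∅ →
        (∀ κ ∈ nbar E i m, χi κ 0 = xGi κ) ∧
        (∀ κ ∈ nbar E i m, ∀ t ∈ Set.Ici (0:ℝ),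
          HasDerivWithinAt (χi κ) (f κ (χi κ t) (fun j => χi j t)) (Set.Ici 0) t)) ∧
      (nset E i (m + 1) ≠ ∅ →
        (∀ κ ∈ nbar E i (m - 1), χi κ 0 = xGi κ) ∧
        (∀ κ ∈ nbar E i (m - 1), ∀ t ∈ Set.Ici (0:ℝ),
          HasDerivWithinAt (χi κ) (f κ (χi κ t) (fun j => χi j t)) (Set.Ici 0) t) ∧
        (∀ κ ∈ nset E i m, ∀ t : ℝ, χi κ t = xGi κ)))
    (hIVPl :
      (nset E ℓ (m + 1) = ∅ →
        (∀ κ ∈ nbar E ℓ m, χl κ 0 = xGl κ) ∧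
        (∀ κ ∈ nbar E ℓ m, ∀ t ∈ Set.Ici (0:ℝ),
          HasDerivWithinAt (χl κ) (f κ (χl κ t) (fun j => χl j t)) (Set.Ici 0) t)) ∧
      (nset E ℓ (m + 1) ≠ ∅ →
        (∀ κ ∈ nbar E ℓ (m - 1), χl κ 0 = xGl κ) ∧
        (∀ κ ∈ nbar E ℓ (m - 1), ∀ t ∈ Set.Ici (0:ℝ),
          HasDerivWithinAt (χl κ) (f κ (χl κ t) (fun j => χl j t)) (Set.Ici 0) t) ∧
        (∀ κ ∈ nset E ℓ m, ∀ t : ℝ, χl κ t = xGl κ)))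
    (tstar : ℝ) (htpos : 0 < tstar)
    (hroot : Real.exp (L₂ * tstar)
      - (L₂ + L₂ ^ 2 / (L₁ * Real.sqrt (Nmax : ℝ))) * tstar - 1 = 0) :
    ∀ κ ∈ nbar E ℓ (m - 1), ∀ t ∈ Set.Icc (0:ℝ) tstar,
      ‖χi κ t - χl κ t‖ ≤ M * t := by
  have hNm1 : (1:ℝ) ≤ (Nmax:ℝ) := by exact_mod_cast hNmax1
  have hsN : (0:ℝ) < Real.sqrt (Nmax:ℝ) := Real.sqrt_pos.2 (by linarith)
  set c : ℝ := L₁ * Real.sqrt (Nmax:ℝ) * M with hc_def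
  have hc_pos : 0 < c := by positivity
  clear_value c
  set C : Set (Fin Nv) := nbar E i m ∩ nbar E ℓ m with hC_def
  have hm1 : m - 1 + 1 = m := Nat.succ_pred_eq_of_pos hm
  -- dichotomy for the i-side
  have dichi : ∀ κ ∈ nbar E i m, (∀ t, χi κ t = xGi κ) ∨
      (χi κ 0 = xGi κ ∧
       (∀ t ∈ Set.Ici (0:ℝ), HasDerivWithinAt (χi κ)
          (f κ (χi κ t) (fun j => χi j t)) (Set.Ici 0) t) ∧
       (∀ j ∈ nbrFinset E κ, j ∈ nbar E i m)) := by
    intro κ hκ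
    by_cases hP : nset E i (m+1) = ∅
    · obtain ⟨hic, hdyn⟩ := hIVPi.1 hP
      refine Or.inr ⟨hic κ hκ, hdyn κ hκ, ?_⟩
      intro j hj
      rw [nbrFinset, Finset.mem_filter] at hj
      have hj' := mem_nbar_succ_of_nbr hκ hj.2.1 hj.2.2
      obtain ⟨k, hk, hp⟩ := mem_nbar_elim hj'
      exact mem_nbar_pred hP hp hk
    · obtain ⟨hic, hdyn, hfix⟩ := hIVPi.2 hP
      have hκ2 : κ ∈ nbar E i (m-1+1) := by rw [hm1]; exact hκ
      rcases nbar_split hκ2 with hκ' | hκ'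
      · refine Or.inr ⟨hic κ hκ', hdyn κ hκ', ?_⟩
        intro j hj
        rw [nbrFinset, Finset.mem_filter] at hj
        have := mem_nbar_succ_of_nbr hκ' hj.2.1 hj.2.2
        rwa [hm1] at this
      · refine Or.inl (fun t => hfix κ ?_ t)
        rwa [hm1] at hκ'
  have dichl : ∀ κ ∈ nbar E ℓ m, (∀ t, χl κ t = xGl κ) ∨
      (χl κ 0 = xGl κ ∧
       (∀ t ∈ Set.Ici (0:ℝ), HasDerivWithinAt (χl κ)
          (f κ (χl κ t) (fun j => χl j t)) (Set.Ici 0) t) ∧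
       (∀ j ∈ nbrFinset E κ, j ∈ nbar E ℓ m)) := by
    intro κ hκ
    by_cases hP : nset E ℓ (m+1) = ∅
    · obtain ⟨hic, hdyn⟩ := hIVPl.1 hP
      refine Or.inr ⟨hic κ hκ, hdyn κ hκ, ?_⟩
      intro j hj
      rw [nbrFinset, Finset.mem_filter] at hj
      have hj' := mem_nbar_succ_of_nbr hκ hj.2.1 hj.2.2
      obtain ⟨k, hk, hp⟩ := mem_nbar_elim hj'
      exact mem_nbar_pred hP hp hk
    · obtain ⟨hic, hdyn, hfix⟩ := hIVPl.2 hP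
      have hκ2 : κ ∈ nbar E ℓ (m-1+1) := by rw [hm1]; exact hκ
      rcases nbar_split hκ2 with hκ' | hκ'
      · refine Or.inr ⟨hic κ hκ', hdyn κ hκ', ?_⟩
        intro j hj
        rw [nbrFinset, Finset.mem_filter] at hj
        have := mem_nbar_succ_of_nbr hκ' hj.2.1 hj.2.2
        rwa [hm1] at this
      · refine Or.inl (fun t => hfix κ ?_ t)
        rwa [hm1] at hκ'
  -- N̄_ℓ^{m-1} ⊆ C
  have hCsub : nbar E ℓ (m-1) ⊆ C := by
    intro κ hκ
    obtain ⟨k, hk, hp⟩ := mem_nbar_elim hκ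
    have hpath1 : hasPath E 1 ℓ i := ⟨i, hℓ.2, rfl⟩
    have hpi : hasPath E (k+1) κ i := hasPath_trans hp hpath1
    exact ⟨mem_nbar_of_hasPath (by omega) hpi,
      nbar_mono (Nat.sub_le m 1) (mem_nbar_of_hasPath hk hp)⟩
  -- initial conditions agree
  have hici : ∀ κ ∈ C, χi κ 0 = xGi κ := by
    intro κ hκ; rcases dichi κ hκ.1 with h | h
    · exact h 0
    · exact h.1
  have hicl : ∀ κ ∈ C, χl κ 0 = xGl κ := by
    intro κ hκ; rcases dichl κ hκ.2 with h | h
    · exact h 0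
    · exact h.1
  have hd0 : ∀ κ ∈ C, χi κ 0 - χl κ 0 = 0 := by
    intro κ hκ
    rw [hici κ hκ, hicl κ hκ, hagree κ hκ, sub_self]
  -- each side is M-Lipschitz in time
  have hlipi : ∀ κ ∈ C, ∀ s t : ℝ, 0 ≤ s → s ≤ t → ‖χi κ t - χi κ s‖ ≤ M * (t - s) := by
    intro κ hκ s t hs hst
    rcases dichi κ hκ.1 with h | h
    · rw [h t, h s, sub_self, norm_zero]
      have : 0 ≤ t - s := by linarith
      positivity
    · exact lipseg h.2.1 (fun u => hbound κ _ _) hs hst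
  have hlipl : ∀ κ ∈ C, ∀ s t : ℝ, 0 ≤ s → s ≤ t → ‖χl κ t - χl κ s‖ ≤ M * (t - s) := by
    intro κ hκ s t hs hst
    rcases dichl κ hκ.2 with h | h
    · rw [h t, h s, sub_self, norm_zero]
      have : 0 ≤ t - s := by linarith
      positivity
    · exact lipseg h.2.1 (fun u => hbound κ _ _) hs hst
  have hdlip : ∀ κ ∈ C, ∀ s t : ℝ, 0 ≤ s → s ≤ t →
      ‖(χi κ t - χl κ t) - (χi κ s - χl κ s)‖ ≤ 2 * M * (t - s) := by
    intro κ hκ s t hs hst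
    have h1 := hlipi κ hκ s t hs hst
    have h2 := hlipl κ hκ s t hs hst
    have e : (χi κ t - χl κ t) - (χi κ s - χl κ s)
        = (χi κ t - χi κ s) - (χl κ t - χl κ s) := by abel
    rw [e]
    calc ‖(χi κ t - χi κ s) - (χl κ t - χl κ s)‖
        ≤ ‖χi κ t - χi κ s‖ + ‖χl κ t - χl κ s‖ := norm_sub_le _ _
      _ ≤ 2 * M * (t - s) := by linarith
  have hdb : ∀ κ ∈ C, ∀ t : ℝ, 0 ≤ t → ‖χi κ t - χl κ t‖ ≤ 2 * M * t := by
    intro κ hκ t ht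
    have := hdlip κ hκ 0 t le_rfl ht
    rw [hd0 κ hκ, sub_zero, sub_zero] at this
    exact this
  -- continuity
  have hdcont : ∀ κ ∈ C, ∀ b : ℝ, ContinuousOn (fun t => χi κ t - χl κ t) (Set.Icc 0 b) := by
    intro κ hκ b
    have hci : ContinuousOn (χi κ) (Set.Ici (0:ℝ)) := by
      rcases dichi κ hκ.1 with h | h
      · exact continuousOn_const.congr (fun t _ => h t)
      · exact fun t ht => (h.2.1 t ht).continuousWithinAt
    have hcl : ContinuousOn (χl κ) (Set.Ici (0:ℝ)) := by
      rcases dichl κ hκ.2 with h | h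
      · exact continuousOn_const.congr (fun t _ => h t)
      · exact fun t ht => (h.2.1 t ht).continuousWithinAt
    exact ((hci.sub hcl).mono (fun y hy => hy.1))
  -- one-side-fixed bound
  have hfixb : ∀ κ ∈ C, ((∀ t, χi κ t = xGi κ) ∨ (∀ t, χl κ t = xGl κ)) →
      ∀ t : ℝ, 0 ≤ t → ‖χi κ t - χl κ t‖ ≤ M * t := by
    intro κ hκ hfix t ht
    rcases hfix with h | h
    · have e : χi κ t - χl κ t = -(χl κ t - χl κ 0) := by
        rw [h t, hicl κ hκ, hagree κ hκ]
        abel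
      rw [e, norm_neg]
      have := hlipl κ hκ 0 t le_rfl ht
      simpa using this
    · have e : χi κ t - χl κ t = χi κ t - χi κ 0 := by
        rw [h t, hici κ hκ, hagree κ hκ]
      rw [e]
      have := hlipi κ hκ 0 t le_rfl ht
      simpa using this
  -- conditional Gronwall step
  have hstep : ∀ A : ℝ, 0 ≤ A → ∀ T' : ℝ,
      (∀ j ∈ C, ∀ s : ℝ, 0 ≤ s → s < T' → ‖χi j s - χl j s‖ ≤ A * (M * s)) →
      ∀ κ ∈ C, ¬ (∀ t, χi κ t = xGi κ) → ¬ (∀ t, χl κ t = xGl κ) →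
      ∀ t ∈ Set.Icc (0:ℝ) T', ‖χi κ t - χl κ t‖
        ≤ A * c / L₂ ^ 2 * (Real.exp (L₂ * t) - L₂ * t - 1) := by
    intro A hA T' hboot κ hκ hnfi hnfl
    have hi := (dichi κ hκ.1).resolve_left hnfi
    have hl := (dichl κ hκ.2).resolve_left hnfl
    have hjC : ∀ j ∈ nbrFinset E κ, j ∈ C := fun j hj => ⟨hi.2.2 j hj, hl.2.2 j hj⟩
    have hderiv : ∀ s ∈ Set.Ico (0:ℝ) T', HasDerivWithinAt (fun t => χi κ t - χl κ t)
        (f κ (χi κ s) (fun j => χi j s) - f κ (χl κ s) (fun j => χl j s)) (Set.Ici s) s := by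
      intro s hs
      exact ((hi.2.1 s hs.1).sub (hl.2.1 s hs.1)).mono (Set.Ici_subset_Ici.2 hs.1)
    have hbnd : ∀ s ∈ Set.Ico (0:ℝ) T',
        ‖f κ (χi κ s) (fun j => χi j s) - f κ (χl κ s) (fun j => χl j s)‖
          ≤ L₂ * ‖χi κ s - χl κ s‖ + (A * c) * s := by
      intro s hs
      have tri := dist_triangle (f κ (χi κ s) (fun j => χi j s))
        (f κ (χi κ s) (fun j => χl j s)) (f κ (χl κ s) (fun j => χl j s))
      rw [dist_eq_norm, dist_eq_norm, dist_eq_norm] at tri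
      have h1 := hLip2 κ (χi κ s) (χl κ s) (fun j => χl j s)
      have h2 := hLip1 κ (χi κ s) (fun j => χi j s) (fun j => χl j s)
      have hsum : ∑ j ∈ nbrFinset E κ, ‖χi j s - χl j s‖ ^ 2
          ≤ (Nmax : ℝ) * (A * M * s) ^ 2 := by
        have hAMs : (0:ℝ) ≤ A * M * s := mul_nonneg (mul_nonneg hA hM.le) hs.1
        calc ∑ j ∈ nbrFinset E κ, ‖χi j s - χl j s‖ ^ 2
            ≤ ∑ _j ∈ nbrFinset E κ, (A * M * s) ^ 2 := by
              refine Finset.sum_le_sum (fun j hj => ?_)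
              have hb := hboot j (hjC j hj) s hs.1 hs.2
              have : ‖χi j s - χl j s‖ ≤ A * M * s := by
                calc ‖χi j s - χl j s‖ ≤ A * (M * s) := hb
                  _ = A * M * s := by ring
              exact pow_le_pow_left₀ (norm_nonneg _) this 2
          _ = ((nbrFinset E κ).card : ℝ) * (A * M * s) ^ 2 := by
              rw [Finset.sum_const, nsmul_eq_mul]
          _ ≤ (Nmax : ℝ) * (A * M * s) ^ 2 := by
              have hcard : (nbrFinset E κ).card ≤ Nmax :=
                hNmax ▸ Finset.le_sup (f := fun κ => (nbrFinset E κ).card)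
                  (Finset.mem_univ κ)
              have : ((nbrFinset E κ).card : ℝ) ≤ (Nmax : ℝ) := by exact_mod_cast hcard
              nlinarith [sq_nonneg (A * M * s)]
      have hAMs : (0:ℝ) ≤ A * M * s := mul_nonneg (mul_nonneg hA hM.le) hs.1
      have hsqrt : Real.sqrt (∑ j ∈ nbrFinset E κ, ‖χi j s - χl j s‖ ^ 2)
          ≤ Real.sqrt (Nmax : ℝ) * (A * M * s) := by
        have h3 := Real.sqrt_le_sqrt hsum
        rwa [Real.sqrt_mul (by positivity) ((A * M * s) ^ 2),
          Real.sqrt_sq hAMs] at h3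
      have h4 : L₁ * Real.sqrt (∑ j ∈ nbrFinset E κ, ‖χi j s - χl j s‖ ^ 2)
          ≤ (A * c) * s := by
        calc L₁ * Real.sqrt (∑ j ∈ nbrFinset E κ, ‖χi j s - χl j s‖ ^ 2)
            ≤ L₁ * (Real.sqrt (Nmax : ℝ) * (A * M * s)) :=
              mul_le_mul_of_nonneg_left hsqrt hL₁.le
          _ = (A * c) * s := by rw [hc_def]; ring
      calc ‖f κ (χi κ s) (fun j => χi j s) - f κ (χl κ s) (fun j => χl j s)‖
          ≤ ‖f κ (χi κ s) (fun j => χi j s) - f κ (χi κ s) (fun j => χl j s)‖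
            + ‖f κ (χi κ s) (fun j => χl j s) - f κ (χl κ s) (fun j => χl j s)‖ := tri
        _ ≤ (A * c) * s + L₂ * ‖χi κ s - χl κ s‖ := add_le_add (h2.trans h4) h1
        _ = L₂ * ‖χi κ s - χl κ s‖ + (A * c) * s := by ring
    exact gron_aux hL₂ (hdcont κ hκ T') hderiv (hd0 κ hκ) hbnd
  -- strict secant bound from the root equation
  have hwst : Real.exp (L₂ * tstar)
      = (L₂ + L₂ ^ 2 / (L₁ * Real.sqrt (Nmax:ℝ))) * tstar + 1 := by linarith [hroot]
  have hvlt : ∀ τ : ℝ, 0 < τ → τ < tstar →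
      c / L₂ ^ 2 * (Real.exp (L₂ * τ) - L₂ * τ - 1) < M * τ := by
    intro τ h0 h1
    have hθ0 : 0 < τ / tstar := div_pos h0 htpos
    have hθ1 : τ / tstar < 1 := (div_lt_one htpos).2 h1
    have hne : (0:ℝ) ≠ L₂ * tstar := ne_of_lt (by positivity)
    have hsc := strictConvexOn_exp.2 (Set.mem_univ (0:ℝ)) (Set.mem_univ (L₂ * tstar)) hne
      (show 0 < 1 - τ / tstar by linarith) hθ0 (by ring)
    simp only [smul_eq_mul, mul_zero, zero_add, Real.exp_zero, mul_one] at hsc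
    have hτ : τ / tstar * (L₂ * tstar) = L₂ * τ := by field_simp
    rw [hτ] at hsc
    have e2 : τ / tstar * (Real.exp (L₂ * tstar) - 1)
        = (L₂ + L₂ ^ 2 / (L₁ * Real.sqrt (Nmax:ℝ))) * τ := by
      rw [hwst]; field_simp; ring
    have key : Real.exp (L₂ * τ) - L₂ * τ - 1 < L₂ ^ 2 / (L₁ * Real.sqrt (Nmax:ℝ)) * τ := by
      have e3 : τ / tstar * Real.exp (L₂ * tstar) - τ / tstar
          = (L₂ + L₂ ^ 2 / (L₁ * Real.sqrt (Nmax:ℝ))) * τ := by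
        rw [← e2]; ring
      nlinarith [hsc]
    have hpos : (0:ℝ) < c / L₂ ^ 2 := div_pos hc_pos (by positivity)
    calc c / L₂ ^ 2 * (Real.exp (L₂ * τ) - L₂ * τ - 1)
        < c / L₂ ^ 2 * (L₂ ^ 2 / (L₁ * Real.sqrt (Nmax:ℝ)) * τ) :=
          mul_lt_mul_of_pos_left key hpos
      _ = M * τ := by rw [hc_def]; field_simp
  have hvle : ∀ τ : ℝ, 0 ≤ τ → τ ≤ tstar →
      c / L₂ ^ 2 * (Real.exp (L₂ * τ) - L₂ * τ - 1) ≤ M * τ := by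
    intro τ h0 h1
    rcases eq_or_lt_of_le h0 with rfl | h0'
    · simp
    rcases eq_or_lt_of_le h1 with rfl | h1'
    · have e : Real.exp (L₂ * τ) - L₂ * τ - 1
          = L₂ ^ 2 / (L₁ * Real.sqrt (Nmax:ℝ)) * τ := by rw [hwst]; ring
      rw [e, hc_def]
      have : L₁ * Real.sqrt (Nmax:ℝ) * M / L₂ ^ 2 * (L₂ ^ 2 / (L₁ * Real.sqrt (Nmax:ℝ)) * τ)
          = M * τ := by field_simp
      rw [this]
    · exact (hvlt τ h0' h1').le
  -- small-time unconditional bound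
  have hexpb : ∀ t : ℝ, 0 ≤ t → t ≤ tstar →
      Real.exp (L₂ * t) - L₂ * t - 1 ≤ L₂ ^ 2 * Real.exp (L₂ * tstar) * t ^ 2 := by
    intro t h0 h1
    have hq := exp_quad (x := L₂ * t) (by positivity)
    have h2 : Real.exp (L₂ * t) ≤ Real.exp (L₂ * tstar) := Real.exp_le_exp.2 (by nlinarith)
    have h3 : (L₂ * t) ^ 2 * Real.exp (L₂ * t) ≤ (L₂ * t) ^ 2 * Real.exp (L₂ * tstar) :=
      mul_le_mul_of_nonneg_left h2 (sq_nonneg _)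
    calc Real.exp (L₂ * t) - L₂ * t - 1 ≤ (L₂ * t) ^ 2 * Real.exp (L₂ * t) := hq
      _ ≤ (L₂ * t) ^ 2 * Real.exp (L₂ * tstar) := h3
      _ = L₂ ^ 2 * Real.exp (L₂ * tstar) * t ^ 2 := by ring
  set t₁ : ℝ := min tstar (M / (2 * c * Real.exp (L₂ * tstar))) with ht₁_def
  have hDen : (0:ℝ) < 2 * c * Real.exp (L₂ * tstar) := by
    have := Real.exp_pos (L₂ * tstar)
    nlinarith
  have ht₁pos : 0 < t₁ := lt_min htpos (div_pos hM hDen)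
  have ht₁tstar : t₁ ≤ tstar := min_le_left _ _
  have ht₁r : t₁ ≤ M / (2 * c * Real.exp (L₂ * tstar)) := min_le_right _ _
  clear_value t₁
  have hsmall : ∀ t : ℝ, 0 ≤ t → t ≤ t₁ →
      2 * c / L₂ ^ 2 * (Real.exp (L₂ * t) - L₂ * t - 1) ≤ M * t := by
    intro t h0 h1
    have h2 := hexpb t h0 (h1.trans ht₁tstar)
    have h3 : t ≤ M / (2 * c * Real.exp (L₂ * tstar)) := h1.trans ht₁r
    have hD : (0:ℝ) < 2 * c * Real.exp (L₂ * tstar) := hDen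
    have h4 : 2 * c * Real.exp (L₂ * tstar) * t ≤ M := by
      have := (le_div_iff₀ hD).1 h3
      linarith
    calc 2 * c / L₂ ^ 2 * (Real.exp (L₂ * t) - L₂ * t - 1)
        ≤ 2 * c / L₂ ^ 2 * (L₂ ^ 2 * Real.exp (L₂ * tstar) * t ^ 2) := by
          apply mul_le_mul_of_nonneg_left h2
          have h9 : (0:ℝ) < L₂ ^ 2 := by positivity
          exact (div_pos (by linarith) h9).le
      _ = (2 * c * Real.exp (L₂ * tstar) * t) * t := by field_simp
      _ ≤ M * t := mul_le_mul_of_nonneg_right h4 h0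
  -- the bootstrap set
  set S : Set ℝ := {τ | τ ∈ Set.Icc (0:ℝ) tstar ∧
    ∀ κ ∈ C, ∀ s : ℝ, 0 ≤ s → s ≤ τ → ‖χi κ s - χl κ s‖ ≤ M * s} with hS_def
  have hS0 : (0:ℝ) ∈ S := by
    refine ⟨⟨le_rfl, htpos.le⟩, ?_⟩
    intro κ hκ s hs hs'
    have hs0 : s = 0 := le_antisymm hs' hs
    subst hs0
    rw [hd0 κ hκ, norm_zero]
    simp
  have hSbdd : BddAbove S := ⟨tstar, fun τ hτ => hτ.1.2⟩
  set T : ℝ := sSup S with hT_def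
  have hT0 : 0 ≤ T := le_csSup hSbdd hS0
  have hTtstar : T ≤ tstar := csSup_le ⟨0, hS0⟩ (fun τ hτ => hτ.1.2)
  have hTSlt : ∀ κ ∈ C, ∀ s : ℝ, 0 ≤ s → s < T → ‖χi κ s - χl κ s‖ ≤ M * s := by
    intro κ hκ s hs hlt
    obtain ⟨τ, hτS, hsτ⟩ := exists_lt_of_lt_csSup ⟨0, hS0⟩ hlt
    exact hτS.2 κ hκ s hs hsτ.le
  clear_value T
  have hTS : ∀ κ ∈ C, ∀ s : ℝ, 0 ≤ s → s ≤ T → ‖χi κ s - χl κ s‖ ≤ M * s := by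
    intro κ hκ s hs hsT
    rcases hsT.lt_or_eq with hlt | heq
    · exact hTSlt κ hκ s hs hlt
    refine le_of_forall_pos_le_add ?_
    intro ε hε
    rcases eq_or_lt_of_le hs with hs0 | hs0
    · rw [← hs0, hd0 κ hκ, norm_zero]
      simp
      positivity
    · set s' : ℝ := max 0 (s - ε / (2 * M)) with hs'_def
      have hs'0 : 0 ≤ s' := le_max_left _ _
      have hεM : 0 < ε / (2 * M) := by positivity
      have hs'T : s' < s := max_lt hs0 (by linarith)
      have hb1 : ‖χi κ s' - χl κ s'‖ ≤ M * s' := hTSlt κ hκ s' hs'0 (heq ▸ hs'T)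
      have hb2 := hdlip κ hκ s' s hs'0 hs'T.le
      have hTs' : s - s' ≤ ε / (2 * M) := by
        have := le_max_right 0 (s - ε / (2 * M))
        have : s - ε / (2 * M) ≤ s' := this
        linarith
      have htri : ‖χi κ s - χl κ s‖
          ≤ ‖χi κ s' - χl κ s'‖ + ‖(χi κ s - χl κ s) - (χi κ s' - χl κ s')‖ := by
        calc ‖χi κ s - χl κ s‖
            = ‖(χi κ s' - χl κ s') + ((χi κ s - χl κ s) - (χi κ s' - χl κ s'))‖ := by
              congr 1; abel
          _ ≤ _ := norm_add_le _ _
      have h2M : 2 * M * (s - s') ≤ ε := by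
        have h5 : 2 * M * (s - s') ≤ 2 * M * (ε / (2 * M)) :=
          mul_le_mul_of_nonneg_left hTs' (by positivity)
        have h6 : 2 * M * (ε / (2 * M)) = ε := by field_simp
        linarith
      have h7 : M * s' ≤ M * s := mul_le_mul_of_nonneg_left hs'T.le hM.le
      linarith
  -- t₁ ∈ S, so T > 0
  have ht₁S : t₁ ∈ S := by
    refine ⟨⟨ht₁pos.le, ht₁tstar⟩, ?_⟩
    intro κ hκ s hs hst
    by_cases hfi : ∀ t, χi κ t = xGi κ
    · exact hfixb κ hκ (Or.inl hfi) s hs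
    by_cases hfl : ∀ t, χl κ t = xGl κ
    · exact hfixb κ hκ (Or.inr hfl) s hs
    have hboot : ∀ j ∈ C, ∀ u : ℝ, 0 ≤ u → u < tstar → ‖χi j u - χl j u‖ ≤ 2 * (M * u) := by
      intro j hj u hu _
      have := hdb j hj u hu
      linarith [this]
    have hg := hstep 2 (by norm_num) tstar hboot κ hκ hfi hfl s
      ⟨hs, hst.trans ht₁tstar⟩
    exact hg.trans (hsmall s hs hst)
  have hTt₁ : t₁ ≤ T := by rw [hT_def]; exact le_csSup hSbdd ht₁S
  -- T = tstar
  have hTeq : T = tstar := by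
    by_contra hne
    have hTlt : T < tstar := lt_of_le_of_ne hTtstar hne
    have hTpos : 0 < T := lt_of_lt_of_le ht₁pos hTt₁
    have hρ : 0 < M * T - c / L₂ ^ 2 * (Real.exp (L₂ * T) - L₂ * T - 1) :=
      sub_pos.2 (hvlt T hTpos hTlt)
    set ρ : ℝ := M * T - c / L₂ ^ 2 * (Real.exp (L₂ * T) - L₂ * T - 1) with hρ_def
    clear_value ρ
    set T' : ℝ := min tstar (T + ρ / M) with hT'_def
    have hT'T : T < T' := lt_min hTlt (by
      have : 0 < ρ / M := div_pos hρ hM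
      linarith)
    have hT'tstar : T' ≤ tstar := min_le_left _ _
    have hT'r : T' ≤ T + ρ / M := min_le_right _ _
    clear_value T'
    have hT'S : T' ∈ S := by
      refine ⟨⟨hT0.trans hT'T.le, hT'tstar⟩, ?_⟩
      intro κ hκ s hs hsT'
      rcases le_or_gt s T with h | h
      · exact hTS κ hκ s hs h
      by_cases hfi : ∀ t, χi κ t = xGi κ
      · exact hfixb κ hκ (Or.inl hfi) s hs
      by_cases hfl : ∀ t, χl κ t = xGl κ
      · exact hfixb κ hκ (Or.inr hfl) s hs
      have hbootT : ∀ j ∈ C, ∀ u : ℝ, 0 ≤ u → u < T → ‖χi j u - χl j u‖ ≤ 1 * (M * u) := by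
        intro j hj u hu huT
        rw [one_mul]
        exact hTSlt j hj u hu huT
      have hgr := hstep 1 (by norm_num) T hbootT κ hκ hfi hfl T ⟨hT0, le_rfl⟩
      have hdT : ‖χi κ T - χl κ T‖ ≤ M * T - ρ := by
        have e : 1 * c / L₂ ^ 2 * (Real.exp (L₂ * T) - L₂ * T - 1) = M * T - ρ := by
          rw [hρ_def]; ring
        linarith [hgr, e.ge]
      have hb2 := hdlip κ hκ T s hT0 h.le
      have htri : ‖χi κ s - χl κ s‖
          ≤ ‖χi κ T - χl κ T‖ + ‖(χi κ s - χl κ s) - (χi κ T - χl κ T)‖ := by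
        calc ‖χi κ s - χl κ s‖
            = ‖(χi κ T - χl κ T) + ((χi κ s - χl κ s) - (χi κ T - χl κ T))‖ := by
              congr 1; abel
          _ ≤ _ := norm_add_le _ _
      have h4 : s - T ≤ ρ / M := by
        have h5 : s ≤ T + ρ / M := hsT'.trans hT'r
        linarith
      have h5 : M * (s - T) ≤ ρ := by
        have h6 : (s - T) * M ≤ ρ := (le_div_iff₀ hM).1 h4
        linarith
      linarith
    have hle := le_csSup hSbdd hT'S
    rw [← hT_def] at hle
    exact absurd hle (not_le.2 hT'T)
  -- conclusion
  intro κ hκ t ht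
  exact hTS κ (hCsub hκ) t ht.1 (hTeq ▸ ht.2)
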